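/- Let A be an interpolatory mask, i.e. A_{2j} = D·δ_j where δ is the matrix delta sequence and D = diag(1,1/2)⊗I. Define B̃ by (B̃^T)_k = (−1)^{1−k} A_{1−k} D^{−1}. Then for every sequence c, (D_{B̃^T} c)_i = (c − S_A D^{−1} D_δ c)_{2i+1}, i.e. D_{B̃^T} = D_δ L (id − S_A D^{−1} D_δ), where (D_δ c)_j = c_{2j} and (L c)_i = c_{i+1}. -/

import Mathlib

open scoped BigOperators
open Matrix

/-- Subdivision operator `(S_A c)_j = ∑_k A_{j-2k} c_k`. -/
noncomputable def subd {m : ℕ} (A : ℤ → Matrix (Fin 2 × Fin m) (Fin 2 × Fin m) ℝ)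
    (c : ℤ → Fin 2 × Fin m → ℝ) : ℤ → Fin 2 × Fin m → ℝ :=
  fun j => ∑ᶠ k : ℤ, (A (j - 2 * k)).mulVec (c k)

/-- Decomposition operator `(D_M c)_j = ∑_i M_{i-2j} c_i`. -/
noncomputable def decomp {m : ℕ} (M : ℤ → Matrix (Fin 2 × Fin m) (Fin 2 × Fin m) ℝ)
    (c : ℤ → Fin 2 × Fin m → ℝ) : ℤ → Fin 2 × Fin m → ℝ :=
  fun j => ∑ᶠ i : ℤ, (M (i - 2 * j)).mulVec (c i)

/-- The matrix `D = diag(1, 1/2) ⊗ I_m`. -/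
noncomputable def Dmat (m : ℕ) : Matrix (Fin 2 × Fin m) (Fin 2 × Fin m) ℝ :=
  Matrix.of fun p q => if p = q then (if p.1 = 0 then 1 else 1 / 2) else 0

/-- The matrix `D⁻¹ = diag(1, 2) ⊗ I_m`. -/
noncomputable def Dinv (m : ℕ) : Matrix (Fin 2 × Fin m) (Fin 2 × Fin m) ℝ :=
  Matrix.of fun p q => if p = q then (if p.1 = 0 then 1 else 2) else 0

lemma Dmat_mul_Dinv (m : ℕ) : Dmat m * Dinv m = 1 := by
  have h1 : Dmat m = Matrix.diagonal (fun p : Fin 2 × Fin m => if p.1 = 0 then (1:ℝ) else 1/2) := by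
    ext p q; simp [Dmat, Matrix.diagonal_apply]
  have h2 : Dinv m = Matrix.diagonal (fun p : Fin 2 × Fin m => if p.1 = 0 then (1:ℝ) else 2) := by
    ext p q; simp [Dinv, Matrix.diagonal_apply]
  rw [h1, h2, Matrix.diagonal_mul_diagonal]
  have : (fun p : Fin 2 × Fin m => (if p.1 = 0 then (1:ℝ) else 1/2) * (if p.1 = 0 then (1:ℝ) else 2)) = fun _ => 1 := by
    funext p; split_ifs <;> norm_num
  rw [this, Matrix.diagonal_one]

/-- For an interpolatory mask `A` (`A_{2j} = D δ_j`) and the mask `Bt` with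
`(Btᵀ)_k = (−1)^{1−k} A_{1−k} D⁻¹`, the decomposition operator `D_{Btᵀ}` satisfies
`(D_{Btᵀ} c)_i = (c − S_A D⁻¹ D_δ c)_{2i+1}`, i.e. `D_{Btᵀ} = D_δ L (id − S_A D⁻¹ D_δ)`. -/
theorem pred_corr_wavelet_operator {m : ℕ}
    (A : ℤ → Matrix (Fin 2 × Fin m) (Fin 2 × Fin m) ℝ)
    (hA : (Function.support A).Finite)
    (hinterp : ∀ j : ℤ, A (2 * j) = if j = 0 then Dmat m else 0)
    (BtT : ℤ → Matrix (Fin 2 × Fin m) (Fin 2 × Fin m) ℝ)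
    (hBtT : ∀ k : ℤ, BtT k = ((-1 : ℝ) ^ (1 - k)) • (A (1 - k) * Dinv m)) :
    ∀ (c : ℤ → Fin 2 × Fin m → ℝ) (i : ℤ),
      decomp BtT c i =
        c (2 * i + 1) - subd A (fun j => (Dinv m).mulVec (c (2 * j))) (2 * i + 1) := by
  intro c i
  classical
  set s : Finset ℤ := insert 0 hA.toFinset with hs
  have hsupp : ∀ a : ℤ, A a ≠ 0 → a ∈ s := by
    intro a ha; exact Finset.mem_insert_of_mem (hA.mem_toFinset.mpr ha)
  -- Step 1 : decomp as a finset sum over s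
  have step1 : decomp BtT c i =
      ∑ a ∈ s, ((-1 : ℝ) ^ a) • ((A a * Dinv m).mulVec (c (2 * i + 1 - a))) := by
    have hsub : Function.support (fun k : ℤ => (BtT (k - 2 * i)).mulVec (c k)) ⊆
        (s.image (fun a => 2 * i + 1 - a) : Finset ℤ) := by
      intro k hk
      have hB : BtT (k - 2 * i) ≠ 0 := by
        intro h; apply hk; simp [h, Matrix.mulVec]
      have hAk : A (1 - (k - 2 * i)) ≠ 0 := by
        intro h; apply hB; rw [hBtT, h]; simp
      have ha : (2 * i + 1 - k) ∈ s := by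
        have : (1 - (k - 2 * i)) = 2 * i + 1 - k := by ring
        exact hsupp _ (this ▸ hAk)
      simp only [Finset.coe_image, Set.mem_image, Finset.mem_coe]
      exact ⟨2 * i + 1 - k, ha, by ring⟩
    rw [decomp, finsum_eq_finset_sum_of_support_subset _ hsub,
      Finset.sum_image (by intro a _ b _ h; dsimp only at h; omega)]
    refine Finset.sum_congr rfl ?_
    intro a _
    have h1 : (2 * i + 1 - a - 2 * i) = 1 - a := by ring
    have h2 : (1 - (1 - a)) = a := by ring
    rw [h1, hBtT, h2, smul_mulVec]
  rw [step1, ← Finset.sum_filter_add_sum_filter_not s (fun a => Even a)]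
  -- even part
  have heven : ∑ a ∈ s.filter (fun a => Even a),
      ((-1 : ℝ) ^ a) • ((A a * Dinv m).mulVec (c (2 * i + 1 - a))) = c (2 * i + 1) := by
    have hA0 : A 0 = Dmat m := by have := hinterp 0; simpa using this
    rw [Finset.sum_eq_single_of_mem 0 (by simp [hs])]
    · rw [hA0, Dmat_mul_Dinv]; simp
    · intro a ha hne
      obtain ⟨t, ht⟩ := (Finset.mem_filter.mp ha).2
      have ht' : a = 2 * t := by omega
      have : A a = 0 := by rw [ht', hinterp]; simp [show t ≠ 0 by omega]
      simp [this, Matrix.mulVec]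
  -- odd part
  have hodd : ∑ a ∈ s.filter (fun a => ¬ Even a),
      ((-1 : ℝ) ^ a) • ((A a * Dinv m).mulVec (c (2 * i + 1 - a))) =
      - subd A (fun j => (Dinv m).mulVec (c (2 * j))) (2 * i + 1) := by
    have hsub : Function.support
        (fun k : ℤ => (A (2 * i + 1 - 2 * k)).mulVec ((Dinv m).mulVec (c (2 * k)))) ⊆
        ((s.filter (fun a => ¬ Even a)).image (fun a => (2 * i + 1 - a) / 2) : Finset ℤ) := by
      intro k hk
      have hAk : A (2 * i + 1 - 2 * k) ≠ 0 := by
        intro h; apply hk; simp [h, Matrix.mulVec]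
      have ha : (2 * i + 1 - 2 * k) ∈ s.filter (fun a => ¬ Even a) := by
        refine Finset.mem_filter.mpr ⟨hsupp _ hAk, ?_⟩
        intro ⟨t, ht⟩; omega
      simp only [Finset.coe_image, Set.mem_image, Finset.mem_coe]
      exact ⟨2 * i + 1 - 2 * k, ha, by omega⟩
    rw [subd, finsum_eq_finset_sum_of_support_subset _ hsub,
      Finset.sum_image (by
        intro a ha b hb h
        have h1 := Int.not_even_iff.mp (Finset.mem_filter.mp ha).2
        have h2 := Int.not_even_iff.mp (Finset.mem_filter.mp hb).2
        dsimp only at h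
        omega),
      ← Finset.sum_neg_distrib]
    refine Finset.sum_congr rfl ?_
    intro a ha
    have hoa : ¬ Even a := (Finset.mem_filter.mp ha).2
    have hdvd : (2:ℤ) ∣ (2 * i + 1 - a) := by
      rcases Int.not_even_iff_odd.mp hoa with ⟨t, ht⟩
      exact ⟨i - t, by omega⟩
    have h2 : 2 * ((2 * i + 1 - a) / 2) = 2 * i + 1 - a := Int.mul_ediv_cancel' hdvd
    have h3 : 2 * i + 1 - 2 * ((2 * i + 1 - a) / 2) = a := by omega
    have hsign : ((-1 : ℝ) ^ a) = -1 := (Int.not_even_iff_odd.mp hoa).neg_one_zpow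
    rw [hsign, h3, h2, Matrix.mulVec_mulVec, neg_smul, one_smul]
  rw [heven, hodd, sub_eq_add_neg]
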